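/- arXiv:0903.4226 — 2 statements merged into one kernel-verified Lean document; each statement's English description precedes it below -/
import Mathlib

section
/- Let a_n^{(k)} be the Mahler coefficients of S^k. For all n ≥ 0, p^{⌊log_p n⌋} · |a_n^{(k)}| ≤ p^k, with equality if and only if n = p^k. (Here for n = 0 interpret ⌊log_p n⌋ = 0.) -/
open Finset fwdDiff

open Finset fwdDiff

/-- Mahler coefficients of `i ↦ i / q`. -/
noncomputable def bseq (q n : ℕ) : ℤ := (fwdDiff (1:ℕ))^[n] (fun i : ℕ => ((i / q : ℕ) : ℤ)) 0

/-- Mahler coefficients of `i ↦ i % q`. -/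
noncomputable def cseq (q n : ℕ) : ℤ := (fwdDiff (1:ℕ))^[n] (fun i : ℕ => ((i % q : ℕ) : ℤ)) 0

lemma bseq_eq_sum (q n : ℕ) :
    bseq q n = ∑ i ∈ Finset.range (n + 1),
      (-1 : ℤ) ^ (n + i) * (n.choose i) * ((i / q : ℕ) : ℤ) := by
  rw [bseq, fwdDiff_iter_eq_sum_shift]
  refine Finset.sum_congr rfl fun i hi => ?_
  rw [Finset.mem_range] at hi
  have : n + i = (n - i) + 2 * i := by omega
  rw [this, pow_add, pow_mul, neg_one_sq, one_pow, mul_one, smul_eq_mul]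
  simp [smul_eq_mul]

lemma q_bseq_add_cseq (q n : ℕ) :
    (q : ℤ) * bseq q n + cseq q n = if n = 1 then 1 else 0 := by
  have hfun : (fun i : ℕ => ((i : ℕ) : ℤ)) =
      (q : ℤ) • (fun i : ℕ => ((i / q : ℕ) : ℤ)) + (fun i : ℕ => ((i % q : ℕ) : ℤ)) := by
    funext i
    simp only [Pi.add_apply, Pi.smul_apply, smul_eq_mul]
    exact_mod_cast (Nat.div_add_mod i q).symm
  have h1 : (fwdDiff (1:ℕ))^[n] (fun i : ℕ => ((i : ℕ) : ℤ)) 0 = if n = 1 then 1 else 0 := by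
    have : (fun i : ℕ => ((i : ℕ) : ℤ)) = (fun i : ℕ => (i.choose 1 : ℤ)) := by
      funext i; rw [Nat.choose_one_right]
    rw [this, fwdDiff_iter_choose_zero]
  rw [← h1, hfun, fwdDiff_iter_add, fwdDiff_iter_const_smul]
  simp [bseq, cseq, smul_eq_mul]

lemma bseq_of_lt {q n : ℕ} (h : n < q) : bseq q n = 0 := by
  rw [bseq_eq_sum]
  refine Finset.sum_eq_zero fun i hi => ?_
  rw [Finset.mem_range] at hi
  rw [Nat.div_eq_of_lt (by omega), Nat.cast_zero, mul_zero]

lemma bseq_q {q : ℕ} (hq : 0 < q) : bseq q q = 1 := by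
  rw [bseq_eq_sum, Finset.sum_range_succ]
  have h0 : ∑ i ∈ Finset.range q, (-1 : ℤ) ^ (q + i) * (q.choose i) * ((i / q : ℕ) : ℤ) = 0 :=
    Finset.sum_eq_zero fun i hi => by
      rw [Finset.mem_range] at hi
      rw [Nat.div_eq_of_lt hi, Nat.cast_zero, mul_zero]
  rw [h0, zero_add, Nat.choose_self, Nat.div_self hq]
  have : (-1 : ℤ) ^ (q + q) = 1 := Even.neg_one_pow ⟨q, rfl⟩
  rw [this]; norm_num

lemma cseq_of_lt {q n : ℕ} (h : n < q) : cseq q n = if n = 1 then 1 else 0 := by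
  have := q_bseq_add_cseq q n
  rw [bseq_of_lt h] at this
  linarith [this]

lemma cseq_q {q : ℕ} (hq : 1 < q) : cseq q q = -q := by
  have := q_bseq_add_cseq q q
  rw [bseq_q (by omega), if_neg (by omega)] at this
  linarith [this]

lemma fwdDiff_iter_per (sg : ℕ → ℤ) (q : ℕ) (hper : ∀ x, sg (x + q) = sg x) (m : ℕ) :
    (fwdDiff (1:ℕ))^[m] sg 0 =
      ∑ j ∈ Finset.range (q + 1), (q.choose j : ℤ) * (fwdDiff (1:ℕ))^[m + j] sg 0 := by
  have hfun : sg = ∑ j ∈ Finset.range (q + 1), q.choose j • (fwdDiff (1:ℕ))^[j] sg := by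
    funext x
    rw [Finset.sum_apply]
    have h1 := shift_eq_sum_fwdDiff_iter (1 : ℕ) sg q x
    rw [smul_eq_mul, mul_one] at h1
    rw [← hper x, h1]
    rfl
  conv_lhs => rw [hfun]
  rw [fwdDiff_iter_finset_sum, Finset.sum_apply]
  refine Finset.sum_congr rfl fun j hj => ?_
  rw [fwdDiff_iter_const_smul, Pi.smul_apply, ← Function.iterate_add_apply]
  simp [nsmul_eq_mul]

lemma cseq_rec {q : ℕ} (hq : 0 < q) (m : ℕ) :
    cseq q (m + q) = -∑ j ∈ Finset.Ico 1 q, (q.choose j : ℤ) * cseq q (m + j) := by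
  have key : cseq q m = ∑ j ∈ Finset.range (q + 1), (q.choose j : ℤ) * cseq q (m + j) :=
    fwdDiff_iter_per (fun i : ℕ => ((i % q : ℕ) : ℤ)) q
      (fun x => by simp only [Nat.add_mod_right]) m
  rw [Finset.sum_range_succ, Nat.choose_self] at key
  rw [Finset.range_eq_Ico, Finset.sum_eq_sum_Ico_succ_bot hq] at key
  rw [Nat.choose_zero_right, add_zero] at key
  push_cast at key
  linarith [key]

lemma pow_dvd_choose_prime_pow {p k j : ℕ} (hp : p.Prime) (hj1 : 1 ≤ j) (hjq : j < p ^ k) :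
    p ^ (k - (j.factorization p)) ∣ (p ^ k).choose j := by
  set v := j.factorization p with hv
  have hj0 : j ≠ 0 := by omega
  have hdvd : p ^ v ∣ j := Nat.ordProj_dvd j p
  have hle : p ^ v ≤ j := Nat.le_of_dvd (by omega) hdvd
  have hvk : v < k := by
    have : p ^ v < p ^ k := lt_of_le_of_lt hle hjq
    exact (Nat.pow_lt_pow_iff_right hp.one_lt).mp this
  -- q * choose (q-1) (j-1) = choose q j * j
  have hkey : p ^ k ∣ (p ^ k).choose j * j := by
    have hqpos : 0 < p ^ k := pow_pos hp.pos k
    have h : (p ^ k - 1).succ * (p ^ k - 1).choose (j - 1) =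
        (p ^ k - 1).succ.choose (j - 1).succ * (j - 1).succ :=
      Nat.add_one_mul_choose_eq (p ^ k - 1) (j - 1)
    have hq1 : (p ^ k - 1).succ = p ^ k := Nat.succ_pred_eq_of_pos hqpos
    have hj1' : (j - 1).succ = j := Nat.succ_pred_eq_of_pos hj1
    rw [hq1, hj1'] at h
    exact ⟨(p ^ k - 1).choose (j - 1), by rw [← h]⟩
  set u := j / p ^ v with hu
  have hju : j = p ^ v * u := by rw [hu, Nat.mul_div_cancel' hdvd]
  have hpu : ¬ p ∣ u := Nat.not_dvd_ordCompl hp hj0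
  have h2 : p ^ (k - v) * p ^ v ∣ (p ^ k).choose j * (p ^ v * u) := by
    rw [← pow_add]
    have : k - v + v = k := by omega
    rw [this, ← hju]
    exact hkey
  have h3 : p ^ (k - v) ∣ (p ^ k).choose j * u := by
    have hpos : 0 < p ^ v := pow_pos hp.pos v
    refine (Nat.mul_dvd_mul_iff_right hpos).mp ?_
    calc p ^ (k - v) * p ^ v ∣ (p ^ k).choose j * (p ^ v * u) := h2
    _ = (p ^ k).choose j * u * p ^ v := by ring
  have hcop : Nat.Coprime (p ^ (k - v)) u :=
    Nat.Coprime.pow_left _ ((Nat.Prime.coprime_iff_not_dvd hp).mpr hpu)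
  exact hcop.dvd_of_dvd_mul_right h3

lemma cseq_dvd {p k : ℕ} (hp : p.Prime) :
    ∀ n, p ^ k < n → (p : ℤ) ^ (Nat.log p n + 1) ∣ cseq (p ^ k) n := by
  intro n
  induction n using Nat.strong_induction_on with
  | _ n IH =>
    intro hn
    set q := p ^ k with hqdef
    have hq0 : 0 < q := pow_pos hp.pos k
    have hn0 : n ≠ 0 := by omega
    set L := Nat.log p n with hL
    have hkL : k ≤ L := Nat.le_log_of_pow_le hp.one_lt (le_of_lt hn)
    have hm : n = (n - q) + q := by omega
    rw [hm, cseq_rec hq0 (n - q)]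
    rw [dvd_neg]
    refine Finset.dvd_sum fun j hj => ?_
    rw [Finset.mem_Ico] at hj
    obtain ⟨hj1, hjq⟩ := hj
    set v := j.factorization p with hv
    have hdvdj : p ^ v ∣ j := Nat.ordProj_dvd j p
    have hlej : p ^ v ≤ j := Nat.le_of_dvd (by omega) hdvdj
    have hvk : v < k := by
      have : p ^ v < p ^ k := lt_of_le_of_lt hlej hjq
      exact (Nat.pow_lt_pow_iff_right hp.one_lt).mp this
    have hC : (p : ℤ) ^ (k - v) ∣ ((q.choose j : ℕ) : ℤ) := by
      exact_mod_cast Int.natCast_dvd_natCast.mpr (pow_dvd_choose_prime_pow hp hj1 hjq)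
    set w := n - q + j with hw
    have hw2 : 2 ≤ w := by omega
    have hwn : w < n := by omega
    rcases lt_trichotomy w q with hlt | heq | hgt
    · rw [cseq_of_lt hlt, if_neg (by omega), mul_zero]
      exact dvd_zero _
    · rw [heq]
      have hq1 : 1 < q := by omega
      rw [cseq_q hq1]
      -- n = 2q - j < p^(k+1), so L ≤ k
      have hnlt : n < p ^ (k + 1) := by
        have h2q : n = 2 * q - j := by omega
        have : 2 * q ≤ p * q := by
          have := hp.two_le
          nlinarith
        calc n < 2 * q := by omega
        _ ≤ p * q := this
        _ = p ^ (k + 1) := by rw [hqdef, pow_succ]; ring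
      have hLk : L ≤ k := by
        have := Nat.log_lt_of_lt_pow hn0 hnlt
        omega
      have : (p : ℤ) ^ (L + 1) ∣ (p : ℤ) ^ (k - v) * (p : ℤ) ^ k := by
        rw [← pow_add]
        exact pow_dvd_pow _ (by omega)
      refine dvd_trans this ?_
      have : (-(q : ℤ)) = (p : ℤ) ^ k * (-1) := by push_cast [hqdef]; ring
      rw [this]
      exact mul_dvd_mul hC (dvd_mul_right _ _)
    · -- w > q, use IH
      have hIH := IH w hwn hgt
      set Lw := Nat.log p w with hLw
      -- key: Lw + k ≥ L + v
      have hkey : L + v ≤ Lw + k := by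
        rcases le_or_gt (L + v) k with h | h
        · omega
        · have hple : p ^ (L + v - k) ≤ w := by
            rcases eq_or_lt_of_le hkL with hLk | hLk
            · -- L = k : p^v ≤ j < w
              have : L + v - k = v := by omega
              rw [this]
              omega
            · -- L ≥ k+1
              have hpL : p ^ L ≤ n := Nat.pow_log_le_self p hn0
              have h1 : p ^ (L + v - k) ≤ p ^ (L - 1) :=
                Nat.pow_le_pow_right hp.pos (by omega)
              have h2 : p ^ (L - 1) + p ^ (L - 1) ≤ p ^ L := by
                have : 2 * p ^ (L - 1) ≤ p * p ^ (L - 1) :=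
                  Nat.mul_le_mul_right _ hp.two_le
                have hLL : p * p ^ (L - 1) = p ^ L := by
                  rw [← pow_succ']
                  congr 1
                  omega
                omega
              have h3 : q ≤ p ^ (L - 1) := by
                rw [hqdef]
                exact Nat.pow_le_pow_right hp.pos (by omega)
              omega
          have := Nat.le_log_of_pow_le hp.one_lt hple
          omega
      have hsplit : (p : ℤ) ^ (L + 1) ∣ (p : ℤ) ^ (k - v) * (p : ℤ) ^ (Lw + 1) := by
        rw [← pow_add]
        exact pow_dvd_pow _ (by omega)
      exact dvd_trans hsplit (mul_dvd_mul hC hIH)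

lemma bseq_dvd {p k n : ℕ} (hp : p.Prime) (hn : p ^ k < n) :
    (p : ℤ) ^ (Nat.log p n + 1 - k) ∣ bseq (p ^ k) n := by
  set L := Nat.log p n with hL
  have hq0 : 0 < p ^ k := pow_pos hp.pos k
  have hkL : k ≤ L := Nat.le_log_of_pow_le hp.one_lt hn.le
  have h1 := cseq_dvd hp n hn
  have h2 := q_bseq_add_cseq (p ^ k) n
  rw [if_neg (by omega)] at h2
  have h3 : cseq (p ^ k) n = -(((p ^ k : ℕ) : ℤ) * bseq (p ^ k) n) := by linarith
  rw [h3, dvd_neg] at h1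
  have hsplit : (p : ℤ) ^ k * (p : ℤ) ^ (L + 1 - k) = (p : ℤ) ^ (L + 1) := by
    rw [← pow_add]; congr 1; omega
  have h4 : (p : ℤ) ^ k * (p : ℤ) ^ (L + 1 - k) ∣ (p : ℤ) ^ k * bseq (p ^ k) n := by
    rw [hsplit]; push_cast at h1 ⊢; exact h1
  exact (mul_dvd_mul_iff_left (pow_ne_zero k (by exact_mod_cast hp.ne_zero))).mp h4

variable {p : ℕ} [hp : Fact p.Prime]

lemma padicShift_exists (x : ℤ_[p]) :
    ∃ y : ℤ_[p], x = ((PadicInt.toZMod x).val : ℤ_[p]) + p * y := by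
  have h := PadicInt.toZMod_spec x
  rw [PadicInt.maximalIdeal_eq_span_p, Ideal.mem_span_singleton] at h
  obtain ⟨y, hy⟩ := h
  refine ⟨y, ?_⟩
  rw [← ZMod.natCast_val] at hy
  linear_combination hy

/-- The `p`-adic shift, deleting the first digit of the `p`-adic expansion. -/
noncomputable def padicShift (x : ℤ_[p]) : ℤ_[p] :=
  Classical.choose (padicShift_exists x)

lemma padicShift_natCast (n : ℕ) :
    padicShift ((n : ℕ) : ℤ_[p]) = ((n / p : ℕ) : ℤ_[p]) := by
  have h := Classical.choose_spec (padicShift_exists ((n : ℕ) : ℤ_[p]))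
  have hp1 : (p : ℤ_[p]) ≠ 0 := by
    exact_mod_cast Nat.cast_ne_zero.mpr hp.out.ne_zero
  have hval : ((PadicInt.toZMod ((n : ℕ) : ℤ_[p])).val : ℤ_[p]) = ((n % p : ℕ) : ℤ_[p]) := by
    rw [map_natCast, ZMod.val_natCast]
  have hdm : ((n : ℕ) : ℤ_[p]) = p * ((n / p : ℕ) : ℤ_[p]) + ((n % p : ℕ) : ℤ_[p]) := by
    conv_lhs => rw [← Nat.div_add_mod n p]
    push_cast
    ring
  apply mul_left_cancel₀ hp1
  unfold padicShift
  linear_combination hdm - h - hval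

lemma padicShift_iter_natCast (k n : ℕ) :
    padicShift^[k] ((n : ℕ) : ℤ_[p]) = ((n / p ^ k : ℕ) : ℤ_[p]) := by
  induction k generalizing n with
  | zero => simp
  | succ k ih =>
      rw [Function.iterate_succ_apply, padicShift_natCast, ih, Nat.div_div_eq_div_mul,
        pow_succ']

/-- The `n`-th Mahler coefficient of the `k`-fold iterate of the `p`-adic shift. -/
noncomputable def mahlerCoeffShift (k n : ℕ) : ℤ_[p] :=
  ∑ i ∈ Finset.range (n + 1),
    (-1 : ℤ_[p]) ^ (n + i) * padicShift^[k] ((i : ℤ_[p])) * (n.choose i : ℤ_[p])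

lemma mahlerCoeffShift_eq_bseq (k n : ℕ) :
    mahlerCoeffShift (p := p) k n = ((bseq (p ^ k) n : ℤ) : ℤ_[p]) := by
  rw [mahlerCoeffShift, bseq_eq_sum, Int.cast_sum]
  refine Finset.sum_congr rfl fun i hi => ?_
  rw [padicShift_iter_natCast, Int.cast_mul, Int.cast_mul, Int.cast_pow, Int.cast_neg,
    Int.cast_one, Int.cast_natCast, Int.cast_natCast]
  ring

/-- `p^{⌊log_p n⌋} |a_n^{(k)}| ≤ p^k`, with equality iff `n = p^k`. -/
theorem mahlerCoeffShift_norm_le_and_eq_iff (k n : ℕ) :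
    (p : ℝ) ^ (Nat.log p n) * ‖mahlerCoeffShift (p := p) k n‖ ≤ (p : ℝ) ^ k ∧
    ((p : ℝ) ^ (Nat.log p n) * ‖mahlerCoeffShift (p := p) k n‖ = (p : ℝ) ^ k ↔ n = p ^ k) := by
  have hpR : (1 : ℝ) < (p : ℝ) := by exact_mod_cast hp.out.one_lt
  have hp0 : (0 : ℝ) < (p : ℝ) := by linarith
  have hq0 : 0 < p ^ k := pow_pos hp.out.pos k
  rw [mahlerCoeffShift_eq_bseq]
  rcases lt_trichotomy n (p ^ k) with h | h | h
  · rw [bseq_of_lt h]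
    simp only [Int.cast_zero, norm_zero, mul_zero]
    refine ⟨by positivity, ?_, ?_⟩
    · intro h'
      exact absurd h'.symm (ne_of_gt (by positivity))
    · intro h'; omega
  · subst h
    rw [bseq_q hq0, Nat.log_pow hp.out.one_lt]
    simp only [Int.cast_one, norm_one, mul_one]
    exact ⟨le_refl _, by simp⟩
  · set L := Nat.log p n with hL
    have hkL : k ≤ L := Nat.le_log_of_pow_le hp.out.one_lt h.le
    have hd := bseq_dvd hp.out h
    have hnorm : ‖((bseq (p ^ k) n : ℤ) : ℤ_[p])‖ ≤ (p : ℝ) ^ (-(L + 1 - k : ℕ) : ℤ) :=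
      PadicInt.norm_int_le_pow_iff_dvd.mpr hd
    have key : (p : ℝ) ^ (L : ℕ) * ‖((bseq (p ^ k) n : ℤ) : ℤ_[p])‖ < (p : ℝ) ^ (k : ℕ) := by
      calc (p : ℝ) ^ (L : ℕ) * ‖((bseq (p ^ k) n : ℤ) : ℤ_[p])‖
          ≤ (p : ℝ) ^ (L : ℕ) * (p : ℝ) ^ (-(L + 1 - k : ℕ) : ℤ) :=
            mul_le_mul_of_nonneg_left hnorm (by positivity)
        _ = (p : ℝ) ^ ((L : ℤ) + (-(L + 1 - k : ℕ) : ℤ)) := by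
            rw [← zpow_natCast (p : ℝ) L, ← zpow_add₀ (ne_of_gt hp0)]
        _ < (p : ℝ) ^ ((k : ℕ) : ℤ) := by
            apply zpow_lt_zpow_right₀ hpR
            omega
        _ = (p : ℝ) ^ (k : ℕ) := zpow_natCast _ _
    exact ⟨le_of_lt key, fun h' => absurd h' (ne_of_lt key), fun h' => absurd h' (by omega)⟩
end

section
/- Let T: Z_p → Z_p be (p^{-k}, p^k) locally scaling. Then T is mixing with respect to the Haar probability measure μ on Z_p: for all μ-measurable sets U, V, lim_{n→∞} μ(T^{-n}(U) ∩ V) = μ(U)·μ(V). -/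
open MeasureTheory

variable {p : ℕ} [hp : Fact p.Prime]

noncomputable instance : MeasurableSpace ℤ_[p] := borel _
instance : BorelSpace ℤ_[p] := ⟨rfl⟩

open Metric Set

theorem Isometry.surjective_of_compactSpace' {X : Type*} [MetricSpace X] [CompactSpace X]
    {f : X → X} (hf : Isometry f) : Function.Surjective f := by
  intro y
  by_contra hy
  have hclosed : IsClosed (Set.range f) := (isCompact_range hf.continuous).isClosed
  have hne : (Set.range f).Nonempty := ⟨f y, y, rfl⟩
  have hpos : 0 < Metric.infDist y (Set.range f) :=
    (hclosed.notMem_iff_infDist_pos hne).mp (by simpa using hy)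
  obtain ⟨a, -, φ, hφ, hconv⟩ := IsCompact.tendsto_subseq (x := fun n => f^[n] y)
      isCompact_univ (fun n => trivial)
  have hcauchy := hconv.cauchySeq
  rw [Metric.cauchySeq_iff] at hcauchy
  obtain ⟨N, hN⟩ := hcauchy _ hpos
  have h1 := hN (N + 1) (Nat.le_succ N) N le_rfl
  have hlt : φ N < φ (N + 1) := hφ (Nat.lt_succ_self N)
  have hiter : ∀ n : ℕ, Isometry (f^[n]) := by
    intro n; induction n with
    | zero => simpa using isometry_id
    | succ n ih => rw [Function.iterate_succ]; exact ih.comp hf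
  obtain ⟨d, hd1, hd2⟩ : ∃ d : ℕ, 1 ≤ d ∧ φ (N + 1) = φ N + d := ⟨φ (N + 1) - φ N, by omega, by omega⟩
  have heq : dist (f^[φ (N + 1)] y) (f^[φ N] y) = dist (f^[d] y) y := by
    rw [hd2, Function.iterate_add_apply]
    exact (hiter (φ N)).dist_eq _ _
  have hmem : f^[d] y ∈ Set.range f := by
    obtain ⟨e, he⟩ : ∃ e, d = e + 1 := ⟨d - 1, by omega⟩
    rw [he, Function.iterate_succ_apply']
    exact ⟨_, rfl⟩
  have h2 := Metric.infDist_le_dist_of_mem (x := y) hmem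
  simp only [Function.comp] at h1
  rw [heq] at h1
  rw [dist_comm] at h2
  linarith

namespace LS


lemma ppos : (0:ℝ) < p := by exact_mod_cast hp.out.pos
lemma pne : (p:ℝ) ≠ 0 := ne_of_gt ppos
lemma rpos (m : ℕ) : (0:ℝ) < (p:ℝ)^(-(m:ℤ)) := zpow_pos ppos _
lemma p_one_lt : (1:ℝ) < p := by exact_mod_cast hp.out.one_lt
lemma r_anti {m l : ℕ} (h : m ≤ l) : (p:ℝ)^(-(l:ℤ)) ≤ (p:ℝ)^(-(m:ℤ)) :=
  zpow_le_zpow_right₀ (le_of_lt (p_one_lt (p := p))) (by omega)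

lemma cb_subset {x y : ℤ_[p]} {r s : ℝ} (hxy : dist x y ≤ s) (hrs : r ≤ s) :
    closedBall x r ⊆ closedBall y s := by
  intro z hz
  rw [mem_closedBall] at hz ⊢
  exact le_trans (IsUltrametricDist.dist_triangle_max z x y) (max_le (hz.trans hrs) hxy)

lemma norm_le_pow_iff_dvd' (x : ℤ_[p]) (n : ℕ) :
    ‖x‖ ≤ (p:ℝ)^(-(n:ℤ)) ↔ (p:ℤ_[p])^n ∣ x := by
  rw [PadicInt.norm_le_pow_iff_mem_span_pow, Ideal.mem_span_singleton]

lemma norm_pmul (n : ℕ) (z : ℤ_[p]) : ‖(p:ℤ_[p])^n * z‖ = (p:ℝ)^(-(n:ℤ)) * ‖z‖ := by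
  rw [norm_mul, PadicInt.norm_p_pow]

lemma cb_disj {x y : ℤ_[p]} {r s : ℝ} (h : max r s < dist x y) :
    closedBall x r ∩ closedBall y s = ∅ := by
  ext z
  simp only [mem_inter_iff, mem_closedBall, mem_empty_iff_false, iff_false, not_and]
  intro h1 h2
  have h3 := IsUltrametricDist.dist_triangle_max x z y
  rw [dist_comm x z] at h3
  exact absurd (h3.trans (max_le (h1.trans (le_max_left r s)) (h2.trans (le_max_right r s)))) (not_le.mpr h)

lemma ball_eq_biUnion (x : ℤ_[p]) {m M : ℕ} (h : m ≤ M) :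
    closedBall x ((p:ℝ)^(-(m:ℤ))) =
      ⋃ t ∈ Finset.range (p^(M-m)),
        closedBall (x + (p:ℤ_[p])^m * (t:ℕ)) ((p:ℝ)^(-(M:ℤ))) := by
  apply Subset.antisymm
  · intro y hy
    rw [mem_closedBall, dist_eq_norm] at hy
    obtain ⟨z, hz⟩ := (norm_le_pow_iff_dvd' _ m).mp hy
    refine Set.mem_biUnion (Finset.mem_range.mpr (PadicInt.appr_lt z (M-m))) ?_
    rw [mem_closedBall, dist_eq_norm]
    have he : y - (x + (p:ℤ_[p])^m * (z.appr (M-m) : ℕ)) =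
        (p:ℤ_[p])^m * (z - (z.appr (M-m) : ℕ)) := by
      rw [mul_sub, ← hz]; ring
    rw [he, norm_pmul]
    have h2 : ‖z - ((z.appr (M-m) : ℕ) : ℤ_[p])‖ ≤ (p:ℝ)^(-((M-m:ℕ):ℤ)) :=
      (PadicInt.norm_le_pow_iff_mem_span_pow _ _).mpr (PadicInt.appr_spec _ z)
    calc (p:ℝ)^(-(m:ℤ)) * ‖z - ((z.appr (M-m) : ℕ) : ℤ_[p])‖
        ≤ (p:ℝ)^(-(m:ℤ)) * (p:ℝ)^(-((M-m:ℕ):ℤ)) :=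
          mul_le_mul_of_nonneg_left h2 (le_of_lt (rpos m))
      _ = (p:ℝ)^(-(M:ℤ)) := by
          rw [← zpow_add₀ pne, Nat.cast_sub h]; ring_nf
  · refine Set.iUnion₂_subset fun t ht => ?_
    apply cb_subset ?_ (r_anti h)
    rw [dist_eq_norm, show x + (p:ℤ_[p])^m * t - x = (p:ℤ_[p])^m * t by ring,
      norm_pmul]
    calc (p:ℝ)^(-(m:ℤ)) * ‖((t:ℕ):ℤ_[p])‖ ≤ (p:ℝ)^(-(m:ℤ)) * 1 :=
          mul_le_mul_of_nonneg_left (PadicInt.norm_le_one _) (le_of_lt (rpos m))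
      _ = (p:ℝ)^(-(m:ℤ)) := mul_one _

lemma ball_disj_pair (x : ℤ_[p]) {m M : ℕ} (h : m ≤ M) {t t' : ℕ}
    (ht : t < p^(M-m)) (ht' : t' < p^(M-m)) (hne : t ≠ t') :
    closedBall (x + (p:ℤ_[p])^m * (t:ℕ)) ((p:ℝ)^(-(M:ℤ))) ∩
      closedBall (x + (p:ℤ_[p])^m * (t':ℕ)) ((p:ℝ)^(-(M:ℤ))) = ∅ := by
  apply cb_disj
  rw [max_self, dist_eq_norm,
    show x + (p:ℤ_[p])^m * t - (x + (p:ℤ_[p])^m * t') = (p:ℤ_[p])^m * ((t:ℤ_[p]) - t') by ring,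
    norm_pmul]
  by_contra hle
  push_neg at hle
  have h1 : ‖(t:ℤ_[p]) - (t':ℤ_[p])‖ ≤ (p:ℝ)^(-((M-m:ℕ):ℤ)) := by
    have h0 := mul_le_mul_of_nonneg_left hle (le_of_lt (zpow_pos (ppos (p:=p)) (m:ℤ)))
    rwa [← mul_assoc, ← zpow_add₀ pne, add_neg_cancel, zpow_zero, one_mul,
      ← zpow_add₀ pne, show (m:ℤ) + -(M:ℤ) = -((M-m:ℕ):ℤ) by rw [Nat.cast_sub h]; ring] at h0
  have h2 : ((p:ℤ)^(M-m)) ∣ ((t:ℤ) - t') := by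
    rw [← PadicInt.norm_int_le_pow_iff_dvd]
    push_cast
    exact h1
  obtain ⟨q, hq⟩ : ∃ q, p^(M-m) = q := ⟨_, rfl⟩
  rw [hq] at ht ht'
  have h3 : ((t:ℤ) - t').natAbs < ((p:ℤ)^(M-m)).natAbs := by
    rw [Int.natAbs_pow, Int.natAbs_natCast, hq]
    omega
  have := Int.eq_zero_of_dvd_of_natAbs_lt_natAbs h2 h3
  omega

lemma cb_univ (x : ℤ_[p]) : closedBall x ((p:ℝ)^(-(0:ℕ):ℤ)) = univ := by
  apply eq_univ_iff_forall.mpr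
  intro z
  rw [mem_closedBall]
  simp only [Nat.cast_zero, neg_zero, zpow_zero]
  rw [dist_eq_norm]
  exact PadicInt.norm_le_one _

def pBs (p : ℕ) [Fact p.Prime] : Set (Set ℤ_[p]) :=
  {S | ∃ (x : ℤ_[p]) (m : ℕ), S = closedBall x ((p:ℝ)^(-(m:ℤ)))}

lemma isBasis : TopologicalSpace.IsTopologicalBasis (pBs p) := by
  apply TopologicalSpace.isTopologicalBasis_of_isOpen_of_nhds
  · rintro S ⟨x, m, rfl⟩
    exact IsUltrametricDist.isOpen_closedBall x (ne_of_gt (rpos m))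
  · intro x u hxu hu
    obtain ⟨ε, hε, hb⟩ := Metric.isOpen_iff.mp hu x hxu
    obtain ⟨m, hm⟩ := PadicInt.exists_pow_neg_lt p hε
    refine ⟨closedBall x ((p:ℝ)^(-(m:ℤ))), ⟨x, m, rfl⟩, mem_closedBall_self (le_of_lt (rpos m)), ?_⟩
    exact subset_trans (fun z hz => lt_of_le_of_lt (mem_closedBall.mp hz) hm) hb

lemma mea_eq : (inferInstance : MeasurableSpace ℤ_[p]) = .generateFrom (pBs p) := by
  borelize ℤ_[p]
  exact (isBasis (p := p)).borel_eq_generateFrom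

lemma piSys : IsPiSystem (pBs p) := by
  rintro S ⟨x, m, rfl⟩ T ⟨y, l, rfl⟩ hne
  obtain ⟨z, hz1, hz2⟩ := hne
  rw [mem_closedBall] at hz1 hz2
  have dxy : dist x y ≤ max ((p:ℝ)^(-(m:ℤ))) ((p:ℝ)^(-(l:ℤ))) := by
    have h3 := IsUltrametricDist.dist_triangle_max x z y
    rw [dist_comm x z] at h3
    exact h3.trans (max_le (hz1.trans (le_max_left _ _)) (hz2.trans (le_max_right _ _)))
  rcases le_total ((p:ℝ)^(-(m:ℤ))) ((p:ℝ)^(-(l:ℤ))) with h | h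
  · rw [inter_eq_left.mpr (cb_subset (by rwa [max_eq_right h] at dxy) h)]
    exact ⟨x, m, rfl⟩
  · rw [inter_eq_right.mpr (cb_subset (by rw [dist_comm]; rwa [max_eq_left h] at dxy) h)]
    exact ⟨y, l, rfl⟩

lemma norm_add_big {a b : ℤ_[p]} (h : ‖b‖ < ‖a‖) : ‖a + b‖ = ‖a‖ := by
  rw [IsUltrametricDist.norm_add_eq_max_of_norm_ne_norm h.ne', max_eq_left h.le]

lemma iter_scale (k : ℕ) (T : ℤ_[p] → ℤ_[p])
    (hT : ∀ x y : ℤ_[p], ‖x - y‖ ≤ (p:ℝ)^(-(k:ℤ)) → ‖T x - T y‖ = (p:ℝ)^(k:ℕ) * ‖x - y‖) :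
    ∀ (n : ℕ) (x y : ℤ_[p]), ‖x - y‖ ≤ (p:ℝ)^(-((n*k:ℕ):ℤ)) →
      ‖T^[n] x - T^[n] y‖ = (p:ℝ)^((n*k:ℕ):ℤ) * ‖x - y‖ := by
  intro n
  induction n with
  | zero => intro x y h; simp
  | succ n ih =>
    intro x y hxy
    rw [Nat.succ_mul] at hxy ⊢
    obtain ⟨j, hj⟩ : ∃ j, n * k = j := ⟨_, rfl⟩
    rw [hj] at hxy ih ⊢
    have hk1 : ‖x - y‖ ≤ (p:ℝ)^(-(k:ℤ)) :=
      hxy.trans (zpow_le_zpow_right₀ (le_of_lt (p_one_lt (p := p))) (by push_cast; omega))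
    have hstep := hT x y hk1
    have hstep2 : ‖T x - T y‖ ≤ (p:ℝ)^(-(j:ℤ)) := by
      rw [hstep, ← zpow_natCast (p:ℝ) k]
      calc (p:ℝ)^(k:ℤ) * ‖x - y‖ ≤ (p:ℝ)^(k:ℤ) * (p:ℝ)^(-((j+k:ℕ):ℤ)) :=
            mul_le_mul_of_nonneg_left hxy (le_of_lt (zpow_pos ppos _))
        _ = (p:ℝ)^(-(j:ℤ)) := by
            rw [← zpow_add₀ pne]; congr 1; push_cast; ring
    rw [Function.iterate_succ_apply, Function.iterate_succ_apply, ih _ _ hstep2, hstep,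
      ← zpow_natCast (p:ℝ) k, ← mul_assoc, ← zpow_add₀ pne]
    congr 2

lemma T_cont (k : ℕ) (T : ℤ_[p] → ℤ_[p])
    (hT : ∀ x y : ℤ_[p], ‖x - y‖ ≤ (p:ℝ)^(-(k:ℤ)) → ‖T x - T y‖ = (p:ℝ)^(k:ℕ) * ‖x - y‖) :
    Continuous T := by
  rw [Metric.continuous_iff]
  intro b ε hε
  refine ⟨min ((p:ℝ)^(-(k:ℤ))) (ε / (p:ℝ)^(k:ℕ)), lt_min (rpos k) (div_pos hε (pow_pos (ppos (p:=p)) k)), ?_⟩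
  intro a hab
  rw [dist_eq_norm] at hab ⊢
  have h1 : ‖a - b‖ ≤ (p:ℝ)^(-(k:ℤ)) := le_of_lt (lt_of_lt_of_le hab (min_le_left _ _))
  rw [hT a b h1]
  have h2 : ‖a - b‖ < ε / (p:ℝ)^(k:ℕ) := lt_of_lt_of_le hab (min_le_right _ _)
  rw [lt_div_iff₀ (pow_pos (ppos (p:=p)) k)] at h2
  linarith

lemma phi_pre_empty (c x : ℤ_[p]) (j m : ℕ)
    (h : max ((p:ℝ)^(-(m:ℤ))) ((p:ℝ)^(-(j:ℤ))) < ‖x - c‖) :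
    (fun z : ℤ_[p] => c + (p:ℤ_[p])^j * z) ⁻¹' (closedBall x ((p:ℝ)^(-(m:ℤ)))) = ∅ := by
  ext z
  simp only [mem_preimage, mem_closedBall, mem_empty_iff_false, iff_false, not_le, dist_eq_norm]
  have he : c + (p:ℤ_[p])^j * z - x = -(x - c) + (p:ℤ_[p])^j * z := by ring
  rw [he, norm_add_big, norm_neg]
  · exact lt_of_le_of_lt (le_max_left _ _) h
  · rw [norm_neg]
    calc ‖(p:ℤ_[p])^j * z‖ ≤ (p:ℝ)^(-(j:ℤ)) := by
          rw [norm_pmul]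
          calc (p:ℝ)^(-(j:ℤ)) * ‖z‖ ≤ (p:ℝ)^(-(j:ℤ)) * 1 :=
                mul_le_mul_of_nonneg_left (PadicInt.norm_le_one _) (le_of_lt (rpos j))
            _ = _ := mul_one _
      _ < ‖x - c‖ := lt_of_le_of_lt (le_max_right _ _) h

variable {μ : Measure ℤ_[p]}

lemma mu_univ (hμ : ∀ (x : ℤ_[p]) (m : ℕ),
      μ (closedBall x ((p:ℝ)^(-(m:ℤ)))) = ENNReal.ofReal ((p:ℝ)^(-(m:ℤ)))) :
    μ univ = 1 := by
  rw [← cb_univ (0:ℤ_[p]), hμ 0 0]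
  simp

lemma mu_fin (hμ : ∀ (x : ℤ_[p]) (m : ℕ),
      μ (closedBall x ((p:ℝ)^(-(m:ℤ)))) = ENNReal.ofReal ((p:ℝ)^(-(m:ℤ)))) :
    IsFiniteMeasure μ :=
  ⟨by rw [mu_univ hμ]; exact ENNReal.one_lt_top⟩

section Psi

variable (k : ℕ) (T : ℤ_[p] → ℤ_[p]) (n : ℕ) (c : ℤ_[p])

lemma psi_isometry
    (hT : ∀ x y : ℤ_[p], ‖x - y‖ ≤ (p:ℝ)^(-(k:ℤ)) → ‖T x - T y‖ = (p:ℝ)^(k:ℕ) * ‖x - y‖) :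
    Isometry (fun z : ℤ_[p] => T^[n] (c + (p:ℤ_[p])^(n*k) * z)) := by
  apply Isometry.of_dist_eq
  intro a b
  simp only [dist_eq_norm]
  have hd : (c + (p:ℤ_[p])^(n*k)*a) - (c + (p:ℤ_[p])^(n*k)*b) = (p:ℤ_[p])^(n*k) * (a - b) := by
    ring
  have h1 : ‖(c + (p:ℤ_[p])^(n*k)*a) - (c + (p:ℤ_[p])^(n*k)*b)‖
      = (p:ℝ)^(-((n*k:ℕ):ℤ)) * ‖a - b‖ := by rw [hd, norm_pmul]
  have h2 : ‖(c + (p:ℤ_[p])^(n*k)*a) - (c + (p:ℤ_[p])^(n*k)*b)‖ ≤ (p:ℝ)^(-((n*k:ℕ):ℤ)) := by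
    rw [h1]
    calc (p:ℝ)^(-((n*k:ℕ):ℤ)) * ‖a - b‖ ≤ (p:ℝ)^(-((n*k:ℕ):ℤ)) * 1 := by
          apply mul_le_mul_of_nonneg_left ?_ (le_of_lt (rpos _))
          rw [← dist_eq_norm]
          exact (PadicInt.norm_le_one _).trans_eq' (by rw [dist_eq_norm])
      _ = _ := mul_one _
  rw [iter_scale k T hT n _ _ h2, h1, ← mul_assoc, ← zpow_add₀ pne, add_neg_cancel, zpow_zero,
    one_mul]

lemma map_psi
    (hT : ∀ x y : ℤ_[p], ‖x - y‖ ≤ (p:ℝ)^(-(k:ℤ)) → ‖T x - T y‖ = (p:ℝ)^(k:ℕ) * ‖x - y‖)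
    (hμ : ∀ (x : ℤ_[p]) (m : ℕ),
      μ (closedBall x ((p:ℝ)^(-(m:ℤ)))) = ENNReal.ofReal ((p:ℝ)^(-(m:ℤ)))) :
    Measure.map (fun z : ℤ_[p] => T^[n] (c + (p:ℤ_[p])^(n*k) * z)) μ = μ := by
  haveI := mu_fin hμ
  have hiso := psi_isometry k T n c hT
  have hmeas : Measurable (fun z : ℤ_[p] => T^[n] (c + (p:ℤ_[p])^(n*k) * z)) :=
    hiso.continuous.measurable
  have hsurj := hiso.surjective_of_compactSpace'
  refine (MeasureTheory.ext_of_generate_finite (pBs p) mea_eq piSys ?_ ?_).symm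
  · rintro S ⟨x, m, rfl⟩
    obtain ⟨x', rfl⟩ := hsurj x
    rw [Measure.map_apply hmeas measurableSet_closedBall, hiso.preimage_closedBall, hμ, hμ]
  · rw [Measure.map_apply hmeas MeasurableSet.univ, preimage_univ]

end Psi

lemma map_phi
    (hμ : ∀ (x : ℤ_[p]) (m : ℕ),
      μ (closedBall x ((p:ℝ)^(-(m:ℤ)))) = ENNReal.ofReal ((p:ℝ)^(-(m:ℤ))))
    (c : ℤ_[p]) (j : ℕ) :
    Measure.map (fun z : ℤ_[p] => c + (p:ℤ_[p])^j * z) μ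
      = ENNReal.ofReal ((p:ℝ)^(j:ℤ)) • μ.restrict (closedBall c ((p:ℝ)^(-(j:ℤ)))) := by
  haveI := mu_fin hμ
  have hcont : Continuous (fun z : ℤ_[p] => c + (p:ℤ_[p])^j * z) :=
    continuous_const.add (continuous_const.mul continuous_id)
  have hmeas := hcont.measurable
  haveI : IsFiniteMeasure (Measure.map (fun z : ℤ_[p] => c + (p:ℤ_[p])^j * z) μ) :=
    ⟨by rw [Measure.map_apply hmeas MeasurableSet.univ, preimage_univ, mu_univ hμ]
        exact ENNReal.one_lt_top⟩
  refine MeasureTheory.ext_of_generate_finite (pBs p) mea_eq piSys ?_ ?_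
  · rintro S ⟨x, m, rfl⟩
    rw [Measure.map_apply hmeas measurableSet_closedBall, Measure.smul_apply, smul_eq_mul,
      Measure.restrict_apply measurableSet_closedBall]
    rcases le_total j m with hjm | hmj
    · by_cases hcx : ‖x - c‖ ≤ (p:ℝ)^(-(j:ℤ))
      · obtain ⟨w, hw⟩ := (norm_le_pow_iff_dvd' _ j).mp hcx
        have hsplit : (p:ℝ)^(-(m:ℤ)) = (p:ℝ)^(-(j:ℤ)) * (p:ℝ)^(-((m-j:ℕ):ℤ)) := by
          rw [← zpow_add₀ pne]; congr 1; rw [Nat.cast_sub hjm]; ring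
        have hpre : (fun z : ℤ_[p] => c + (p:ℤ_[p])^j * z) ⁻¹' (closedBall x ((p:ℝ)^(-(m:ℤ))))
            = closedBall w ((p:ℝ)^(-((m-j:ℕ):ℤ))) := by
          ext z
          simp only [mem_preimage, mem_closedBall, dist_eq_norm]
          rw [show c + (p:ℤ_[p])^j * z - x = (p:ℤ_[p])^j * (z - w) by
              rw [mul_sub, ← hw]; ring, norm_pmul, hsplit,
            mul_le_mul_iff_right₀ (rpos j)]
        rw [hpre, hμ,
          inter_eq_left.mpr (cb_subset (by rw [dist_eq_norm]; exact hcx) (r_anti hjm)), hμ,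
          ← ENNReal.ofReal_mul (le_of_lt (zpow_pos ppos _)), ← zpow_add₀ pne]
        congr 2
        rw [Nat.cast_sub hjm]; ring
      · push_neg at hcx
        have hmax : max ((p:ℝ)^(-(m:ℤ))) ((p:ℝ)^(-(j:ℤ))) < ‖x - c‖ := by
          rwa [max_eq_right (r_anti hjm)]
        rw [phi_pre_empty c x j m hmax, measure_empty,
          cb_disj (by rwa [dist_eq_norm]), measure_empty, mul_zero]
    · by_cases hcx : ‖x - c‖ ≤ (p:ℝ)^(-(m:ℤ))
      · have hpre : (fun z : ℤ_[p] => c + (p:ℤ_[p])^j * z) ⁻¹' (closedBall x ((p:ℝ)^(-(m:ℤ))))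
            = univ := by
          apply eq_univ_iff_forall.mpr
          intro z
          simp only [mem_preimage, mem_closedBall, dist_eq_norm]
          rw [show c + (p:ℤ_[p])^j * z - x = -(x - c) + (p:ℤ_[p])^j * z by ring]
          refine (IsUltrametricDist.norm_add_le_max _ _).trans (max_le ?_ ?_)
          · rwa [norm_neg]
          · rw [norm_pmul]
            calc (p:ℝ)^(-(j:ℤ)) * ‖z‖ ≤ (p:ℝ)^(-(j:ℤ)) * 1 :=
                  mul_le_mul_of_nonneg_left (PadicInt.norm_le_one _) (le_of_lt (rpos j))
              _ ≤ (p:ℝ)^(-(m:ℤ)) := by rw [mul_one]; exact r_anti hmj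
        rw [hpre, mu_univ hμ,
          inter_eq_right.mpr (cb_subset (by rw [dist_eq_norm, norm_sub_rev]; exact hcx)
            (r_anti hmj)), hμ,
          ← ENNReal.ofReal_mul (le_of_lt (zpow_pos ppos _)), ← zpow_add₀ pne,
          add_neg_cancel, zpow_zero, ENNReal.ofReal_one]
      · push_neg at hcx
        have hmax : max ((p:ℝ)^(-(m:ℤ))) ((p:ℝ)^(-(j:ℤ))) < ‖x - c‖ := by
          rwa [max_eq_left (r_anti hmj)]
        rw [phi_pre_empty c x j m hmax, measure_empty,
          cb_disj (by rwa [dist_eq_norm]), measure_empty, mul_zero]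
  · rw [Measure.map_apply hmeas MeasurableSet.univ, preimage_univ, mu_univ hμ,
      Measure.smul_apply, smul_eq_mul, Measure.restrict_apply MeasurableSet.univ, univ_inter,
      hμ, ← ENNReal.ofReal_mul (le_of_lt (zpow_pos ppos _)), ← zpow_add₀ pne,
      add_neg_cancel, zpow_zero, ENNReal.ofReal_one]

section Key

variable (k : ℕ) (T : ℤ_[p] → ℤ_[p]) {μ : Measure ℤ_[p]}

lemma key0
    (hT : ∀ x y : ℤ_[p], ‖x - y‖ ≤ (p:ℝ)^(-(k:ℤ)) → ‖T x - T y‖ = (p:ℝ)^(k:ℕ) * ‖x - y‖)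
    (hμ : ∀ (x : ℤ_[p]) (m : ℕ),
      μ (closedBall x ((p:ℝ)^(-(m:ℤ)))) = ENNReal.ofReal ((p:ℝ)^(-(m:ℤ))))
    {U : Set ℤ_[p]} (hU : MeasurableSet U) (n : ℕ) (c : ℤ_[p]) :
    μ ((T^[n]) ⁻¹' U ∩ closedBall c ((p:ℝ)^(-((n*k:ℕ):ℤ))))
      = μ U * ENNReal.ofReal ((p:ℝ)^(-((n*k:ℕ):ℤ))) := by
  have hphi := map_phi hμ c (n*k)
  have hpsi := map_psi k T n c hT hμ
  have hTmeas : Measurable (T^[n]) := (T_cont k T hT).measurable.iterate n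
  have hA : MeasurableSet ((T^[n]) ⁻¹' U) := hTmeas hU
  have hmeasφ : Measurable (fun z : ℤ_[p] => c + (p:ℤ_[p])^(n*k) * z) :=
    (continuous_const.add (continuous_const.mul continuous_id)).measurable
  have hmeasψ : Measurable (fun z : ℤ_[p] => T^[n] (c + (p:ℤ_[p])^(n*k) * z)) :=
    hTmeas.comp hmeasφ
  have h1 : μ ((fun z : ℤ_[p] => c + (p:ℤ_[p])^(n*k) * z) ⁻¹' ((T^[n]) ⁻¹' U))
      = ENNReal.ofReal ((p:ℝ)^((n*k:ℕ):ℤ))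
        * μ ((T^[n]) ⁻¹' U ∩ closedBall c ((p:ℝ)^(-((n*k:ℕ):ℤ)))) := by
    have h0 := congrArg (fun ν : Measure ℤ_[p] => ν ((T^[n]) ⁻¹' U)) hphi
    simpa only [Measure.map_apply hmeasφ hA, Measure.smul_apply, smul_eq_mul,
      Measure.restrict_apply hA] using h0
  have h2 : μ ((fun z : ℤ_[p] => c + (p:ℤ_[p])^(n*k) * z) ⁻¹' ((T^[n]) ⁻¹' U)) = μ U := by
    have h0 := congrArg (fun ν : Measure ℤ_[p] => ν U) hpsi
    simp only [Measure.map_apply hmeasψ hU] at h0; exact h0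
  have hne1 : ENNReal.ofReal ((p:ℝ)^((n*k:ℕ):ℤ)) ≠ 0 := by
    simp only [ne_eq, ENNReal.ofReal_eq_zero, not_le]
    exact zpow_pos ppos _
  have hne2 : ENNReal.ofReal ((p:ℝ)^((n*k:ℕ):ℤ)) ≠ ⊤ := ENNReal.ofReal_ne_top
  calc μ ((T^[n]) ⁻¹' U ∩ closedBall c ((p:ℝ)^(-((n*k:ℕ):ℤ))))
      = (ENNReal.ofReal ((p:ℝ)^((n*k:ℕ):ℤ)))⁻¹
          * (ENNReal.ofReal ((p:ℝ)^((n*k:ℕ):ℤ))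
            * μ ((T^[n]) ⁻¹' U ∩ closedBall c ((p:ℝ)^(-((n*k:ℕ):ℤ))))) := by
        rw [← mul_assoc, ENNReal.inv_mul_cancel hne1 hne2, one_mul]
    _ = (ENNReal.ofReal ((p:ℝ)^((n*k:ℕ):ℤ)))⁻¹ * μ U := by rw [← h1, h2]
    _ = μ U * ENNReal.ofReal ((p:ℝ)^(-((n*k:ℕ):ℤ))) := by
        rw [mul_comm]
        congr 1
        rw [← ENNReal.ofReal_inv_of_pos (zpow_pos ppos _), ← zpow_neg]

lemma key
    (hT : ∀ x y : ℤ_[p], ‖x - y‖ ≤ (p:ℝ)^(-(k:ℤ)) → ‖T x - T y‖ = (p:ℝ)^(k:ℕ) * ‖x - y‖)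
    (hμ : ∀ (x : ℤ_[p]) (m : ℕ),
      μ (closedBall x ((p:ℝ)^(-(m:ℤ)))) = ENNReal.ofReal ((p:ℝ)^(-(m:ℤ))))
    {U : Set ℤ_[p]} (hU : MeasurableSet U) (n : ℕ) {m : ℕ} (hm : m ≤ n*k) (x : ℤ_[p]) :
    μ ((T^[n]) ⁻¹' U ∩ closedBall x ((p:ℝ)^(-(m:ℤ))))
      = μ U * ENNReal.ofReal ((p:ℝ)^(-(m:ℤ))) := by
  have hTmeas : Measurable (T^[n]) := (T_cont k T hT).measurable.iterate n
  have hA : MeasurableSet ((T^[n]) ⁻¹' U) := hTmeas hU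
  have hdisj : (↑(Finset.range (p^(n*k-m))) : Set ℕ).PairwiseDisjoint
      (fun t : ℕ => (T^[n]) ⁻¹' U ∩ closedBall (x + (p:ℤ_[p])^m * (t:ℕ)) ((p:ℝ)^(-((n*k:ℕ):ℤ)))) := by
    intro a ha b hb hab
    have hdp := ball_disj_pair x hm (Finset.mem_range.mp ha) (Finset.mem_range.mp hb) hab
    refine Set.disjoint_iff_inter_eq_empty.mpr ?_
    rw [← subset_empty_iff, ← hdp]
    exact inter_subset_inter inter_subset_right inter_subset_right
  have hmeas' : ∀ t ∈ Finset.range (p^(n*k-m)), MeasurableSet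
      ((T^[n]) ⁻¹' U ∩ closedBall (x + (p:ℤ_[p])^m * (t:ℕ)) ((p:ℝ)^(-((n*k:ℕ):ℤ)))) :=
    fun t _ => hA.inter measurableSet_closedBall
  have hterm : ∀ t ∈ Finset.range (p^(n*k-m)),
      μ ((T^[n]) ⁻¹' U ∩ closedBall (x + (p:ℤ_[p])^m * (t:ℕ)) ((p:ℝ)^(-((n*k:ℕ):ℤ))))
        = μ U * ENNReal.ofReal ((p:ℝ)^(-((n*k:ℕ):ℤ))) :=
    fun t _ => key0 k T hT hμ hU n _
  have hcast : ((p ^ (n*k-m) : ℕ) : ENNReal) = ENNReal.ofReal ((p:ℝ) ^ ((n*k-m : ℕ) : ℤ)) := by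
    rw [zpow_natCast, ← Nat.cast_pow, ENNReal.ofReal_natCast]
  rw [ball_eq_biUnion x hm (M := n*k), inter_iUnion₂,
    measure_biUnion_finset hdisj hmeas', Finset.sum_congr rfl hterm, Finset.sum_const,
    Finset.card_range, nsmul_eq_mul, ← mul_assoc, mul_comm ((p ^ (n*k-m) : ℕ) : ENNReal) (μ U),
    mul_assoc]
  congr 1
  rw [hcast, ← ENNReal.ofReal_mul (le_of_lt (zpow_pos ppos _)), ← zpow_add₀ pne]
  congr 2
  rw [Nat.cast_sub hm]
  ring

lemma preserve
    (hT : ∀ x y : ℤ_[p], ‖x - y‖ ≤ (p:ℝ)^(-(k:ℤ)) → ‖T x - T y‖ = (p:ℝ)^(k:ℕ) * ‖x - y‖)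
    (hμ : ∀ (x : ℤ_[p]) (m : ℕ),
      μ (closedBall x ((p:ℝ)^(-(m:ℤ)))) = ENNReal.ofReal ((p:ℝ)^(-(m:ℤ))))
    {U : Set ℤ_[p]} (hU : MeasurableSet U) (n : ℕ) :
    μ ((T^[n]) ⁻¹' U) = μ U := by
  have h := key k T hT hμ hU n (m := 0) (Nat.zero_le _) 0
  rw [cb_univ (0:ℤ_[p]), inter_univ] at h
  rw [h]
  simp

lemma key_gen
    (hT : ∀ x y : ℤ_[p], ‖x - y‖ ≤ (p:ℝ)^(-(k:ℤ)) → ‖T x - T y‖ = (p:ℝ)^(k:ℕ) * ‖x - y‖)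
    (hμ : ∀ (x : ℤ_[p]) (m : ℕ),
      μ (closedBall x ((p:ℝ)^(-(m:ℤ)))) = ENNReal.ofReal ((p:ℝ)^(-(m:ℤ))))
    {U : Set ℤ_[p]} (hU : MeasurableSet U) (n : ℕ) {W : Set ℤ_[p]}
    (hW : MeasurableSet[MeasurableSpace.generateFrom
      {S : Set ℤ_[p] | ∃ (x : ℤ_[p]) (m : ℕ), m ≤ n*k ∧ S = closedBall x ((p:ℝ)^(-(m:ℤ)))}] W) :
    μ ((T^[n]) ⁻¹' U ∩ W) = μ U * μ W := by
  haveI := mu_fin hμ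
  have hTmeas : Measurable (T^[n]) := (T_cont k T hT).measurable.iterate n
  have hA : MeasurableSet ((T^[n]) ⁻¹' U) := hTmeas hU
  set Cb : Set (Set ℤ_[p]) :=
    {S : Set ℤ_[p] | ∃ (x : ℤ_[p]) (m : ℕ), m ≤ n*k ∧ S = closedBall x ((p:ℝ)^(-(m:ℤ)))}
    with hCbdef
  have hle : MeasurableSpace.generateFrom Cb ≤ (inferInstance : MeasurableSpace ℤ_[p]) := by
    apply MeasurableSpace.generateFrom_le
    rintro S ⟨x, m, hm, rfl⟩
    exact measurableSet_closedBall
  have hpi : IsPiSystem Cb := by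
    rintro S ⟨x, m, hm, rfl⟩ Q ⟨y, l, hl, rfl⟩ hne
    obtain ⟨z, hz1, hz2⟩ := hne
    rw [mem_closedBall] at hz1 hz2
    have dxy : dist x y ≤ max ((p:ℝ)^(-(m:ℤ))) ((p:ℝ)^(-(l:ℤ))) := by
      have h3 := IsUltrametricDist.dist_triangle_max x z y
      rw [dist_comm x z] at h3
      exact h3.trans (max_le (hz1.trans (le_max_left _ _)) (hz2.trans (le_max_right _ _)))
    rcases le_total ((p:ℝ)^(-(m:ℤ))) ((p:ℝ)^(-(l:ℤ))) with h | h
    · rw [inter_eq_left.mpr (cb_subset (by rwa [max_eq_right h] at dxy) h)]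
      exact ⟨x, m, hm, rfl⟩
    · rw [inter_eq_right.mpr (cb_subset (by rw [dist_comm]; rwa [max_eq_left h] at dxy) h)]
      exact ⟨y, l, hl, rfl⟩
  refine MeasurableSpace.induction_on_inter
    (C := fun S _ => μ ((T^[n]) ⁻¹' U ∩ S) = μ U * μ S)
    (m := MeasurableSpace.generateFrom Cb) rfl hpi ?_ ?_ ?_ ?_ _ hW
  · show μ ((T^[n]) ⁻¹' U ∩ ∅) = μ U * μ ∅
    rw [Set.inter_empty, measure_empty, mul_zero]
  · rintro S ⟨x, m, hm, rfl⟩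
    rw [key k T hT hμ hU n hm x, hμ]
  · intro t ht hP
    have htb : MeasurableSet t := hle _ ht
    have h1 : (T^[n]) ⁻¹' U ∩ tᶜ = ((T^[n]) ⁻¹' U) \ ((T^[n]) ⁻¹' U ∩ t) := by
      ext z
      simp only [mem_inter_iff, mem_compl_iff, mem_diff]
      tauto
    rw [h1, measure_diff inter_subset_left (hA.inter htb).nullMeasurableSet (measure_ne_top μ _),
      preserve k T hT hμ hU n, hP, measure_compl htb (measure_ne_top μ t), mu_univ hμ,
      ENNReal.mul_sub (fun _ _ => measure_ne_top μ U), mul_one]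
  · intro f hdisj hfm hPf
    rw [inter_iUnion, measure_iUnion
        (hdisj.mono (fun i j h => h.mono inter_subset_right inter_subset_right))
        (fun i => hA.inter (hle _ (hfm i))),
      measure_iUnion hdisj (fun i => hle _ (hfm i)), tsum_congr hPf, ENNReal.tsum_mul_left]

end Key

end LS

open Metric Set

/-- a `(p^{-k}, p^k)` locally scaling map is mixing for the Haar
probability measure on `ℤ_p` (the measure assigning each closed ball its radius). -/
theorem locallyScaling_mixing (k : ℕ) (hk : 1 ≤ k) (T : ℤ_[p] → ℤ_[p])
    (hT : ∀ x y : ℤ_[p], ‖x - y‖ ≤ (p : ℝ) ^ (-(k : ℤ)) →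
      ‖T x - T y‖ = (p : ℝ) ^ (k : ℕ) * ‖x - y‖)
    (μ : Measure ℤ_[p])
    (hμ : ∀ (x : ℤ_[p]) (m : ℕ),
      μ (Metric.closedBall x ((p : ℝ) ^ (-(m : ℤ)))) = ENNReal.ofReal ((p : ℝ) ^ (-(m : ℤ))))
    (U V : Set ℤ_[p]) (hU : MeasurableSet U) (hV : MeasurableSet V) :
    Filter.Tendsto (fun n => μ ((T^[n]) ⁻¹' U ∩ V)) Filter.atTop
      (nhds (μ U * μ V)) := by
  classical
  haveI := LS.mu_fin hμ
  rw [ENNReal.tendsto_nhds (ENNReal.mul_ne_top (measure_ne_top μ U) (measure_ne_top μ V))]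
  intro ε hε
  rw [Filter.eventually_atTop]
  have hε2 : (ε/2 : ENNReal) ≠ 0 := (ENNReal.half_pos (ne_of_gt hε)).ne'
  obtain ⟨O1, hVO1, hO1open, hO1lt⟩ := V.exists_isOpen_lt_add (measure_ne_top μ V) hε2
  obtain ⟨O2, hVO2, hO2open, hO2lt⟩ := (Vᶜ).exists_isOpen_lt_add (measure_ne_top μ Vᶜ) hε2
  have hO1V : μ (O1 \ V) ≤ ε/2 := by
    rw [measure_diff hVO1 hV.nullMeasurableSet (measure_ne_top μ V)]
    exact tsub_le_iff_right.mpr (by rw [add_comm]; exact hO1lt.le)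
  have hO2V : μ (O2 \ Vᶜ) ≤ ε/2 := by
    rw [measure_diff hVO2 hV.compl.nullMeasurableSet (measure_ne_top μ Vᶜ)]
    exact tsub_le_iff_right.mpr (by rw [add_comm]; exact hO2lt.le)
  set K := O2ᶜ with hKdef
  have hKV : K ⊆ V := fun z hz => by
    by_contra hzV
    exact hz (hVO2 hzV)
  have hVK : μ (V \ K) ≤ ε/2 := by
    refine (measure_mono ?_).trans hO2V
    rintro z ⟨hz1, hz2⟩
    exact ⟨not_not.mp (fun h => hz2 h), fun h => h hz1⟩
  have hKcomp : IsCompact K := hO2open.isClosed_compl.isCompact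
  have hcov : ∀ x ∈ K, ∃ (c : ℤ_[p]) (m : ℕ),
      x ∈ closedBall c ((p:ℝ)^(-(m:ℤ))) ∧ closedBall c ((p:ℝ)^(-(m:ℤ))) ⊆ O1 := by
    intro x hx
    obtain ⟨S, hSmem, hxS, hSO⟩ :=
      (LS.isBasis (p := p)).exists_subset_of_mem_open (hVO1 (hKV hx)) hO1open
    obtain ⟨c, m, rfl⟩ := hSmem
    exact ⟨c, m, hxS, hSO⟩
  choose! cc mm hmem hsub using hcov
  have hKcov : K ⊆ ⋃ x ∈ K, closedBall (cc x) ((p:ℝ)^(-(mm x : ℤ))) :=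
    fun x hx => Set.mem_biUnion hx (hmem x hx)
  obtain ⟨b, hbK, hbfin, hbcov⟩ := hKcomp.elim_finite_subcover_image
    (fun x _ => IsUltrametricDist.isOpen_closedBall _ (ne_of_gt (LS.rpos _))) hKcov
  set W := ⋃ x ∈ b, closedBall (cc x) ((p:ℝ)^(-(mm x : ℤ))) with hWdef
  have hWO1 : W ⊆ O1 := Set.iUnion₂_subset fun x hx => hsub x (hbK hx)
  have hKW : K ⊆ W := hbcov
  set M := hbfin.toFinset.sup mm with hMdef
  refine ⟨M, fun n hn => ?_⟩
  have hmle : ∀ x ∈ b, mm x ≤ n * k := by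
    intro x hx
    calc mm x ≤ M := Finset.le_sup (hbfin.mem_toFinset.mpr hx)
      _ ≤ n := hn
      _ = n * 1 := (mul_one n).symm
      _ ≤ n * k := Nat.mul_le_mul_left n hk
  have hWgen : MeasurableSet[MeasurableSpace.generateFrom
      {S : Set ℤ_[p] | ∃ (x : ℤ_[p]) (m : ℕ), m ≤ n*k ∧ S = closedBall x ((p:ℝ)^(-(m:ℤ)))}] W := by
    have hWeq : W = ⋃ x ∈ hbfin.toFinset, closedBall (cc x) ((p:ℝ)^(-(mm x : ℤ))) := by
      rw [hWdef]; ext z; simp [hbfin.mem_toFinset]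
    rw [hWeq]
    exact hbfin.toFinset.measurableSet_biUnion (fun x hx =>
      MeasurableSpace.measurableSet_generateFrom
        ⟨cc x, mm x, hmle x (hbfin.mem_toFinset.mp hx), rfl⟩)
  have hkey := LS.key_gen k T hT hμ hU n hWgen
  have hWV : μ (W \ V) ≤ ε/2 := (measure_mono (diff_subset_diff_left hWO1)).trans hO1V
  have hVW : μ (V \ W) ≤ ε/2 := (measure_mono (diff_subset_diff_right hKW)).trans hVK
  have hU1 : μ U ≤ 1 := by
    rw [← LS.mu_univ hμ]
    exact measure_mono (subset_univ U)
  have hub : μ ((T^[n]) ⁻¹' U ∩ V) ≤ μ U * μ V + ε := by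
    calc μ ((T^[n]) ⁻¹' U ∩ V) ≤ μ (((T^[n]) ⁻¹' U ∩ W) ∪ (V \ W)) := measure_mono (fun z hz => by
          by_cases hzW : z ∈ W
          · exact Or.inl ⟨hz.1, hzW⟩
          · exact Or.inr ⟨hz.2, hzW⟩)
      _ ≤ μ ((T^[n]) ⁻¹' U ∩ W) + μ (V \ W) := measure_union_le _ _
      _ = μ U * μ W + μ (V \ W) := by rw [hkey]
      _ ≤ μ U * μ W + ε/2 := add_le_add_right hVW _
      _ ≤ μ U * (μ V + ε/2) + ε/2 := by
          refine add_le_add_left (mul_le_mul_right ?_ (μ U)) _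
          calc μ W ≤ μ (V ∪ (W \ V)) := measure_mono (fun z hz => by
                by_cases h : z ∈ V
                · exact Or.inl h
                · exact Or.inr ⟨hz, h⟩)
            _ ≤ μ V + μ (W \ V) := measure_union_le _ _
            _ ≤ μ V + ε/2 := add_le_add_right hWV _
      _ = μ U * μ V + μ U * (ε/2) + ε/2 := by rw [mul_add]
      _ ≤ μ U * μ V + 1 * (ε/2) + ε/2 :=
          add_le_add_left (add_le_add_right (mul_le_mul_left hU1 _) _) _
      _ = μ U * μ V + ε := by rw [one_mul, add_assoc, ENNReal.add_halves]
  have hlb : μ U * μ V ≤ μ ((T^[n]) ⁻¹' U ∩ V) + ε := by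
    calc μ U * μ V ≤ μ U * (μ W + ε/2) := by
          refine mul_le_mul_right ?_ (μ U)
          calc μ V ≤ μ (W ∪ (V \ W)) := measure_mono (fun z hz => by
                by_cases h : z ∈ W
                · exact Or.inl h
                · exact Or.inr ⟨hz, h⟩)
            _ ≤ μ W + μ (V \ W) := measure_union_le _ _
            _ ≤ μ W + ε/2 := add_le_add_right hVW _
      _ = μ U * μ W + μ U * (ε/2) := mul_add _ _ _
      _ ≤ μ ((T^[n]) ⁻¹' U ∩ W) + ε/2 := by
          rw [← hkey]
          exact add_le_add_right
            (le_trans (mul_le_mul_left hU1 _) (le_of_eq (one_mul _))) _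
      _ ≤ (μ ((T^[n]) ⁻¹' U ∩ V) + μ (W \ V)) + ε/2 := by
          refine add_le_add_left ?_ _
          refine (measure_mono (fun z hz => ?_)).trans (measure_union_le _ _)
          by_cases h : z ∈ V
          · exact Or.inl ⟨hz.1, h⟩
          · exact Or.inr ⟨hz.2, h⟩
      _ ≤ (μ ((T^[n]) ⁻¹' U ∩ V) + ε/2) + ε/2 := add_le_add_left (add_le_add_right hWV _) _
      _ = μ ((T^[n]) ⁻¹' U ∩ V) + ε := by rw [add_assoc, ENNReal.add_halves]
  exact ⟨tsub_le_iff_right.mpr hlb, hub⟩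
end
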